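/- Let n ≥ 2, 1 ≤ l ≤ n−1, u = n − l, and y ∈ ℝⁿ. Let S ↦ f_S be a map from size-l subsets of {1,…,n} to ℝⁿ that is uniformly β-stable with respect to the squared loss and labels y, and suppose |f_S(i) − y_i| ≤ c for every size-l subset S and every i ∈ {1,…,n}. Then for any δ > 0, with probability at least 1 − δ over a subset S drawn uniformly at random from the size-l subsets of {1,…,n}: R_S(f_S) ≤ R̂_S(f_S) + β + (2β + c²(l+u)/(lu))·√(π(l,u)·ln(1/δ)/2). -/

import Mathlib

open Matrix BigOperators Finset
open scoped Classical

noncomputable section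

/-- The Laplacian of a weighted graph given by its adjacency matrix. -/
def Lap {n : ℕ} (A : Matrix (Fin n) (Fin n) ℝ) : Matrix (Fin n) (Fin n) ℝ :=
  Matrix.diagonal (fun i => ∑ j, A i j) - A

/-- `A` is a weighted graph adjacency matrix: symmetric, nonnegative, zero diagonal. -/
def IsWeightedGraph {n : ℕ} (A : Matrix (Fin n) (Fin n) ℝ) : Prop :=
  A.IsSymm ∧ (∀ i j, 0 ≤ A i j) ∧ (∀ i, A i i = 0)

/-- The graph with edge set `{(i,j) : A i j > 0}` is connected. -/
def GraphConnected {n : ℕ} (A : Matrix (Fin n) (Fin n) ℝ) : Prop :=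
  (SimpleGraph.fromRel (fun i j => 0 < A i j)).Connected

/-- `LH` is the Laplacian of a `(1±ε)`-spectral sparsifier of the graph with Laplacian `LG`. -/
def IsSparsifier {n : ℕ} (LG LH : Matrix (Fin n) (Fin n) ℝ) (ε : ℝ) : Prop :=
  ∀ x : Fin n → ℝ,
    (1 - ε) * (x ⬝ᵥ LG.mulVec x) ≤ x ⬝ᵥ LH.mulVec x ∧
    x ⬝ᵥ LH.mulVec x ≤ (1 + ε) * (x ⬝ᵥ LG.mulVec x)

/-- Orthogonal projection `I - (1/n)·1·1ᵀ` onto `F = {f : ⟨f,1⟩ = 0}`. -/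
def PF (n : ℕ) : Matrix (Fin n) (Fin n) ℝ :=
  1 - (n : ℝ)⁻¹ • Matrix.of (fun _ _ => (1 : ℝ))

/-- Diagonal 0/1 matrix selecting the coordinates in `S`. -/
def IS {n : ℕ} (S : Finset (Fin n)) : Matrix (Fin n) (Fin n) ℝ :=
  Matrix.diagonal (fun i => if i ∈ S then (1 : ℝ) else 0)

/-- Euclidean norm of a vector. -/
def vnorm {n : ℕ} (x : Fin n → ℝ) : ℝ := Real.sqrt (∑ i, (x i) ^ 2)

/-- `lam` is the smallest eigenvalue of `L` restricted to `F = {x : ⟨x,1⟩ = 0}`, i.e. the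
minimum of the Rayleigh quotient over nonzero vectors of `F`. -/
def IsLam1 {n : ℕ} (L : Matrix (Fin n) (Fin n) ℝ) (lam : ℝ) : Prop :=
  IsLeast {r | ∃ x : Fin n → ℝ, x ≠ 0 ∧ (∑ i, x i) = 0 ∧
    r = (x ⬝ᵥ L.mulVec x) / (∑ i, (x i) ^ 2)} lam

/-- `lam` is the largest eigenvalue of `L`: the maximum of the Rayleigh quotient. -/
def IsLamN {n : ℕ} (L : Matrix (Fin n) (Fin n) ℝ) (lam : ℝ) : Prop :=
  IsGreatest {r | ∃ x : Fin n → ℝ, x ≠ 0 ∧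
    r = (x ⬝ᵥ L.mulVec x) / (∑ i, (x i) ^ 2)} lam

/-- `Lp` is the Moore–Penrose pseudoinverse of `L`. -/
def IsMoorePenrose {n : ℕ} (L Lp : Matrix (Fin n) (Fin n) ℝ) : Prop :=
  L * Lp * L = L ∧ Lp * L * Lp = Lp ∧ (L * Lp).IsSymm ∧ (Lp * L).IsSymm

/-- The stability constant `β` of sparse-HFS. -/
def betaHFS (l : ℕ) (γ ε lam1 k : ℝ) : ℝ :=
  1.5 * k * Real.sqrt l / ((l : ℝ) * γ * (1 - ε) * lam1 - 1) ^ 2 +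
  Real.sqrt 2 * k / ((l : ℝ) * γ * (1 - ε) * lam1 - 1)

/-- `π(l,u) = (lu/(l+u-0.5))·(1/(1 - 1/(2·max{l,u})))`. -/
def piLU (l u : ℕ) : ℝ :=
  ((l : ℝ) * u / ((l : ℝ) + u - 0.5)) * (1 / (1 - 1 / (2 * ((max l u : ℕ) : ℝ))))

lemma Dpos {p : ℝ} (hp0 : 0 ≤ p) (hp1 : p ≤ 1) (h : ℝ) : 0 < 1 - p + p * Real.exp h := by
  rcases eq_or_lt_of_le hp1 with rfl | hlt
  · simpa using Real.exp_pos h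
  · have : 0 ≤ p * Real.exp h := mul_nonneg hp0 (Real.exp_pos h).le
    linarith


lemma hoeff_log {p : ℝ} (hp0 : 0 ≤ p) (hp1 : p ≤ 1) (h : ℝ) :
    Real.log (1 - p + p * Real.exp h) ≤ p * h + h ^ 2 / 8 := by
  set D : ℝ → ℝ := fun t => 1 - p + p * Real.exp t with hD
  have hDpos : ∀ t, 0 < D t := fun t => Dpos hp0 hp1 t
  set L : ℝ → ℝ := fun t => Real.log (D t) - p * t with hL
  set G : ℝ → ℝ := fun t => p * Real.exp t / D t - p with hG
  have hL0 : L 0 = 0 := by simp [hL, hD]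
  have hG0 : G 0 = 0 := by
    simp only [hG, hD, Real.exp_zero, mul_one]
    field_simp
    ring
  have hderivL : ∀ t, HasDerivAt L (G t) t := by
    intro t
    have h1 : HasDerivAt D (p * Real.exp t) t := by
      simpa [hD] using ((Real.hasDerivAt_exp t).const_mul p).const_add (1 - p)
    have h2 : HasDerivAt (fun t => Real.log (D t)) (p * Real.exp t / D t) t :=
      h1.log (hDpos t).ne'
    have h3 := h2.sub ((hasDerivAt_id t).const_mul p)
    simp only [mul_one] at h3
    exact h3
  have hderivG : ∀ t, HasDerivAt G (p * Real.exp t * (1 - p) / (D t) ^ 2) t := by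
    intro t
    have h1 : HasDerivAt D (p * Real.exp t) t := by
      simpa [hD] using ((Real.hasDerivAt_exp t).const_mul p).const_add (1 - p)
    have h2 : HasDerivAt (fun t => p * Real.exp t) (p * Real.exp t) t :=
      (Real.hasDerivAt_exp t).const_mul p
    have h3 := h2.div h1 (hDpos t).ne'
    have : (p * Real.exp t * D t - p * Real.exp t * (p * Real.exp t)) / (D t) ^ 2
        = p * Real.exp t * (1 - p) / (D t) ^ 2 := by
      rw [hD]; ring_nf
    rw [this] at h3
    simpa [hG] using h3.sub_const p
  have hG'bound : ∀ t, ‖p * Real.exp t * (1 - p) / (D t) ^ 2‖ ≤ 1 / 4 := by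
    intro t
    have he : 0 < Real.exp t := Real.exp_pos t
    have hx : 0 ≤ p * Real.exp t := mul_nonneg hp0 he.le
    have hy : 0 ≤ 1 - p := by linarith
    have hnum : 0 ≤ p * Real.exp t * (1 - p) := mul_nonneg hx hy
    have hDt := hDpos t
    rw [Real.norm_eq_abs, abs_of_nonneg (div_nonneg hnum (by positivity))]
    rw [div_le_div_iff₀ (by positivity) (by norm_num)]
    have hDt2 : D t = 1 - p + p * Real.exp t := rfl
    nlinarith [sq_nonneg (p * Real.exp t - (1 - p))]
  have hGbound : ∀ t, |G t| ≤ |t| / 4 := by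
    intro t
    have := Convex.norm_image_sub_le_of_norm_hasDerivWithin_le
      (f := G) (f' := fun t => p * Real.exp t * (1 - p) / (D t) ^ 2)
      (fun x _ => (hderivG x).hasDerivWithinAt) (fun x _ => hG'bound x)
      (convex_univ) (Set.mem_univ 0) (Set.mem_univ t)
    rw [hG0, sub_zero, sub_zero, Real.norm_eq_abs, Real.norm_eq_abs] at this
    linarith [this]
  -- M t := t^2/8 - L t
  set M : ℝ → ℝ := fun t => t ^ 2 / 8 - L t with hM
  have hderivM : ∀ t, HasDerivAt M (t / 4 - G t) t := by
    intro t
    have h1 : HasDerivAt (fun t : ℝ => t ^ 2 / 8) (t / 4) t := by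
      have := (hasDerivAt_pow 2 t).div_const 8
      simpa [hM] using this.congr_deriv (by push_cast; ring)
    exact h1.sub (hderivL t)
  have key : ∀ t, 0 ≤ M t := by
    intro t
    rcases le_or_gt 0 t with ht | ht
    · have hmono : MonotoneOn M (Set.Icc 0 t) := by
        apply monotoneOn_of_deriv_nonneg (convex_Icc 0 t)
        · exact fun x _ => ((hderivM x).continuousAt).continuousWithinAt
        · intro x hx
          exact ((hderivM x).differentiableAt).differentiableWithinAt
        · intro x hx
          rw [(hderivM x).deriv]
          have hx0 : 0 ≤ x := by
            rcases (Set.mem_Icc.mp (interior_subset hx)) with ⟨a, b⟩; exact a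
          have := hGbound x
          rw [abs_of_nonneg hx0] at this
          have := abs_le.mp this
          linarith [this.2]
      have := hmono (Set.mem_Icc.mpr ⟨le_refl 0, ht⟩) (Set.mem_Icc.mpr ⟨ht, le_refl t⟩) ht
      simpa [hM, hL0] using this
    · have hmono : AntitoneOn M (Set.Icc t 0) := by
        apply antitoneOn_of_deriv_nonpos (convex_Icc t 0)
        · exact fun x _ => ((hderivM x).continuousAt).continuousWithinAt
        · intro x hx
          exact ((hderivM x).differentiableAt).differentiableWithinAt
        · intro x hx
          rw [(hderivM x).deriv]
          have hx0 : x ≤ 0 := (Set.mem_Icc.mp (interior_subset hx)).2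
          have := hGbound x
          rw [abs_of_nonpos hx0] at this
          have := abs_le.mp this
          linarith [this.1]
      have := hmono (Set.mem_Icc.mpr ⟨le_refl t, ht.le⟩) (Set.mem_Icc.mpr ⟨ht.le, le_refl 0⟩) ht.le
      simpa [hM, hL0] using this
    
  have := key h
  simp only [hM, hL] at this
  linarith

/-- Finite Hoeffding's lemma: uniform average of `exp (s * d a)` for mean-zero bounded `d`. -/
lemma hoeff_finset {ι : Type*} (F : Finset ι) (hF : F.Nonempty)
    (d : ι → ℝ) (hsum : ∑ a ∈ F, d a = 0) (m M : ℝ)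
    (hd : ∀ a ∈ F, m ≤ d a ∧ d a ≤ M) (s : ℝ) :
    ∑ a ∈ F, Real.exp (s * d a) ≤ F.card * Real.exp (s ^ 2 * (M - m) ^ 2 / 8) := by
  obtain ⟨a₀, ha₀⟩ := hF
  have hcard : (0:ℝ) < F.card := by exact_mod_cast Finset.card_pos.mpr ⟨a₀, ha₀⟩
  have hm0 : m * F.card ≤ 0 := by
    calc m * F.card = ∑ _a ∈ F, m := by rw [Finset.sum_const, nsmul_eq_mul]; ring
    _ ≤ ∑ a ∈ F, d a := Finset.sum_le_sum (fun a ha => (hd a ha).1)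
    _ = 0 := hsum
  have hM0 : 0 ≤ M * F.card := by
    calc (0:ℝ) = ∑ a ∈ F, d a := hsum.symm
    _ ≤ ∑ _a ∈ F, M := Finset.sum_le_sum (fun a ha => (hd a ha).2)
    _ = M * F.card := by rw [Finset.sum_const, nsmul_eq_mul]; ring
  have hm : m ≤ 0 := by nlinarith
  have hM : 0 ≤ M := by nlinarith
  rcases eq_or_lt_of_le (hm.trans hM) with heq | hlt
  · -- m = 0 = M, so d = 0 on F
    have hmz : m = 0 := by
      have := hd a₀ ha₀; nlinarith [hd a₀ ha₀]
    have hMz : M = 0 := by nlinarith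
    have : ∀ a ∈ F, d a = 0 := by
      intro a ha; have := hd a ha; rw [hmz, hMz] at this; linarith [this.1, this.2]
    calc ∑ a ∈ F, Real.exp (s * d a) = ∑ _a ∈ F, (1:ℝ) := by
          apply Finset.sum_congr rfl; intro a ha; rw [this a ha]; simp
    _ = F.card := by simp
    _ ≤ F.card * Real.exp (s ^ 2 * (M - m) ^ 2 / 8) := by
          nlinarith [Real.one_le_exp (by positivity : (0:ℝ) ≤ s ^ 2 * (M - m) ^ 2 / 8)]
  · -- m < M
    set p : ℝ := -m / (M - m) with hp
    have hMm : 0 < M - m := by linarith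
    have hMm : (0:ℝ) < M - m := by linarith
    have hp0 : 0 ≤ p := div_nonneg (by linarith) hMm.le
    have hp1 : p ≤ 1 := by rw [div_le_one hMm]; linarith
    have pointwise : ∀ a ∈ F, Real.exp (s * d a) ≤
        ((M - d a) * Real.exp (s * m) + (d a - m) * Real.exp (s * M)) / (M - m) := by
      intro a ha
      obtain ⟨h1, h2⟩ := hd a ha
      have hθ0 : 0 ≤ (M - d a) / (M - m) := div_nonneg (by linarith) hMm.le
      have hθ0' : 0 ≤ (d a - m) / (M - m) := div_nonneg (by linarith) hMm.le
      have hθs : (M - d a) / (M - m) + (d a - m) / (M - m) = 1 := by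
        field_simp
        ring
      have := convexOn_exp.2 (Set.mem_univ (s * m)) (Set.mem_univ (s * M)) hθ0 hθ0' hθs
      simp only [smul_eq_mul] at this
      have harg : (M - d a) / (M - m) * (s * m) + (d a - m) / (M - m) * (s * M) = s * d a := by
        field_simp; ring
      rw [harg] at this
      calc Real.exp (s * d a)
          ≤ (M - d a) / (M - m) * Real.exp (s * m) + (d a - m) / (M - m) * Real.exp (s * M) := this
        _ = ((M - d a) * Real.exp (s * m) + (d a - m) * Real.exp (s * M)) / (M - m) := by
            rw [div_mul_eq_mul_div, div_mul_eq_mul_div, ← add_div]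
    have hmgf : (M * Real.exp (s * m) - m * Real.exp (s * M)) / (M - m) ≤
        Real.exp (s ^ 2 * (M - m) ^ 2 / 8) := by
      have hDp := Dpos hp0 hp1 (s * (M - m))
      have heqD : (M * Real.exp (s * m) - m * Real.exp (s * M)) / (M - m) =
          Real.exp (s * m) * (1 - p + p * Real.exp (s * (M - m))) := by
        have hexp : Real.exp (s * m) * Real.exp (s * (M - m)) = Real.exp (s * M) := by
          rw [← Real.exp_add]; ring_nf
        rw [hp, ← hexp]; field_simp; ring
      rw [heqD]
      have hpos : (0:ℝ) < Real.exp (s * m) * (1 - p + p * Real.exp (s * (M - m))) :=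
        mul_pos (Real.exp_pos _) hDp
      rw [← Real.exp_log hpos]
      apply Real.exp_le_exp.mpr
      rw [Real.log_mul (Real.exp_pos _).ne' hDp.ne', Real.log_exp]
      have := hoeff_log hp0 hp1 (s * (M - m))
      have hph : p * (s * (M - m)) = -m * s := by
        rw [hp]; field_simp
      have hsq : (s * (M - m)) ^ 2 / 8 = s ^ 2 * (M - m) ^ 2 / 8 := by ring
      linarith [this, hph ▸ this]
    calc ∑ a ∈ F, Real.exp (s * d a)
        ≤ ∑ a ∈ F, ((M - d a) * Real.exp (s * m) + (d a - m) * Real.exp (s * M)) / (M - m) :=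
          Finset.sum_le_sum pointwise
      _ = ((M * F.card - 0) * Real.exp (s * m) + (0 - m * F.card) * Real.exp (s * M)) / (M - m) := by
          rw [← Finset.sum_div]
          congr 1
          rw [Finset.sum_add_distrib, ← Finset.sum_mul, ← Finset.sum_mul]
          rw [Finset.sum_sub_distrib, Finset.sum_sub_distrib, hsum, Finset.sum_const,
            Finset.sum_const, nsmul_eq_mul, nsmul_eq_mul]
          ring
      _ = F.card * ((M * Real.exp (s * m) - m * Real.exp (s * M)) / (M - m)) := by
          field_simp; ring
      _ ≤ F.card * Real.exp (s ^ 2 * (M - m) ^ 2 / 8) := by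
          apply mul_le_mul_of_nonneg_left hmgf hcard.le

variable {n : ℕ}

def sups (l : ℕ) (A : Finset (Fin n)) : Finset (Finset (Fin n)) :=
  (Finset.powersetCard l (Finset.univ : Finset (Fin n))).filter (fun S => A ⊆ S)

lemma mem_sups {l : ℕ} {A S : Finset (Fin n)} :
    S ∈ sups l A ↔ S.card = l ∧ A ⊆ S := by
  simp [sups, Finset.mem_powersetCard_univ]

lemma card_sups {l : ℕ} (A : Finset (Fin n)) (hA : A.card ≤ l) :
    (sups l A).card = (n - A.card).choose (l - A.card) := by
  have key : (sups l A).card = (Aᶜ.powersetCard (l - A.card)).card := by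
    apply Finset.card_bij' (fun S _ => S \ A) (fun T _ => A ∪ T)
    · intro S hS
      rw [_root_.mem_sups] at hS
      rw [Finset.mem_powersetCard]
      constructor
      · intro x hx
        rw [Finset.mem_sdiff] at hx
        simpa using hx.2
      · rw [Finset.card_sdiff_of_subset hS.2, hS.1]
    · intro T hT
      rw [Finset.mem_powersetCard] at hT
      have hdisj : Disjoint A T := by
        rw [Finset.disjoint_left]
        intro x hx hxT
        have := hT.1 hxT
        simp at this
        exact this hx
      rw [_root_.mem_sups]
      refine ⟨?_, Finset.subset_union_left⟩
      rw [Finset.card_union_of_disjoint hdisj, hT.2]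
      omega
    · intro S hS
      rw [_root_.mem_sups] at hS
      exact Finset.union_sdiff_of_subset hS.2
    · intro T hT
      rw [Finset.mem_powersetCard] at hT
      apply Finset.union_sdiff_cancel_left
      rw [Finset.disjoint_left]
      intro x hx hxT
      have := hT.1 hxT
      simp at this
      exact this hx
  rw [key, Finset.card_powersetCard, Finset.card_compl, Fintype.card_fin]

lemma card_sups_not {l : ℕ} (A : Finset (Fin n)) (hA : A.card ≤ l) (b : Fin n) (hb : b ∉ A) :
    ((sups l A).filter (fun S => b ∉ S)).card = (n - A.card - 1).choose (l - A.card) := by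
  have key : ((sups l A).filter (fun S => b ∉ S)).card
      = (((insert b A)ᶜ).powersetCard (l - A.card)).card := by
    apply Finset.card_bij' (fun S _ => S \ A) (fun T _ => A ∪ T)
    · intro S hS
      rw [Finset.mem_filter, _root_.mem_sups] at hS
      rw [Finset.mem_powersetCard]
      constructor
      · intro x hx
        rw [Finset.mem_sdiff] at hx
        simp only [Finset.mem_compl, Finset.mem_insert]
        push_neg
        exact ⟨fun hxb => hS.2 (hxb ▸ hx.1), hx.2⟩
      · rw [Finset.card_sdiff_of_subset hS.1.2, hS.1.1]
    · intro T hT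
      rw [Finset.mem_powersetCard] at hT
      have hsub : ∀ x ∈ T, x ≠ b ∧ x ∉ A := by
        intro x hx
        have := hT.1 hx
        simp only [Finset.mem_compl, Finset.mem_insert] at this
        push_neg at this
        exact this
      have hdisj : Disjoint A T := by
        rw [Finset.disjoint_left]
        exact fun x hx hxT => (hsub x hxT).2 hx
      rw [Finset.mem_filter, _root_.mem_sups]
      refine ⟨⟨?_, Finset.subset_union_left⟩, ?_⟩
      · rw [Finset.card_union_of_disjoint hdisj, hT.2]; omega
      · simp only [Finset.mem_union]
        push_neg
        exact ⟨hb, fun hbT => (hsub b hbT).1 rfl⟩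
    · intro S hS
      rw [Finset.mem_filter, _root_.mem_sups] at hS
      exact Finset.union_sdiff_of_subset hS.1.2
    · intro T hT
      rw [Finset.mem_powersetCard] at hT
      apply Finset.union_sdiff_cancel_left
      rw [Finset.disjoint_left]
      intro x hx hxT
      have := hT.1 hxT
      simp only [Finset.mem_compl, Finset.mem_insert] at this
      push_neg at this
      exact this.2 hx
  rw [key, Finset.card_powersetCard, Finset.card_compl, Fintype.card_fin,
    Finset.card_insert_of_notMem hb]
  congr 1

lemma sum_sups_insert {l : ℕ} (A : Finset (Fin n)) (φ : Finset (Fin n) → ℝ) :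
    ∑ a ∈ Aᶜ, ∑ S ∈ sups l (insert a A), φ S = ((l - A.card : ℕ) : ℝ) * ∑ S ∈ sups l A, φ S := by
  have h1 : ∀ a ∈ Aᶜ, sups l (insert a A) = (sups l A).filter (fun S => a ∈ S) := by
    intro a _
    ext S
    simp only [_root_.mem_sups, Finset.mem_filter, Finset.insert_subset_iff]
    tauto
  calc ∑ a ∈ Aᶜ, ∑ S ∈ sups l (insert a A), φ S
      = ∑ a ∈ Aᶜ, ∑ S ∈ sups l A, if a ∈ S then φ S else 0 := by
        apply Finset.sum_congr rfl
        intro a ha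
        rw [h1 a ha, Finset.sum_filter]
    _ = ∑ S ∈ sups l A, ∑ a ∈ Aᶜ, if a ∈ S then φ S else 0 := Finset.sum_comm
    _ = ∑ S ∈ sups l A, ((l - A.card : ℕ) : ℝ) * φ S := by
        apply Finset.sum_congr rfl
        intro S hS
        rw [← Finset.sum_filter, Finset.sum_const, nsmul_eq_mul]
        have he : Aᶜ.filter (fun a => a ∈ S) = S \ A := by
          ext x
          simp [Finset.mem_sdiff, and_comm]
        rw [he, Finset.card_sdiff_of_subset (_root_.mem_sups.mp hS).2, (_root_.mem_sups.mp hS).1]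
    _ = ((l - A.card : ℕ) : ℝ) * ∑ S ∈ sups l A, φ S := by rw [Finset.mul_sum]

lemma nat_choose_id (m r : ℕ) (h : r ≤ m) :
    (m - r) * m.choose r = m * (m - 1).choose r := by
  rcases Nat.eq_or_lt_of_le h with heq | hlt
  · subst heq
    rcases Nat.eq_zero_or_pos r with rfl | hr
    · simp
    · rw [Nat.sub_self, Nat.zero_mul, Nat.choose_eq_zero_of_lt (by omega)]
      simp
  · have h1 := Nat.add_one_mul_choose_eq (m - 1) (m - r - 1)
    have e1 : (m - 1) + 1 = m := by omega
    have e2 : (m - r - 1) + 1 = m - r := by omega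
    rw [e1, e2] at h1
    have e3 : (m - 1).choose (m - r - 1) = (m - 1).choose r := by
      rw [← Nat.choose_symm (by omega : r ≤ m - 1)]
      congr 1
      omega
    have e4 : m.choose (m - r) = m.choose r := Nat.choose_symm h
    rw [e3, e4] at h1
    rw [h1]
    exact Nat.mul_comm _ _

lemma sum_sups_swap {l : ℕ} (X : Finset (Fin n) → ℝ) (B : ℝ)
    (hswap : ∀ S : Finset (Fin n), S.card = l → ∀ a ∈ S, ∀ b, b ∉ S →
      |X S - X (insert b (S.erase a))| ≤ B)
    (A : Finset (Fin n)) (hA : A.card + 1 ≤ l)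
    (a b : Fin n) (ha : a ∉ A) (hb : b ∉ A) (hab : a ≠ b) :
    |∑ S ∈ sups l (insert a A), X S - ∑ S ∈ sups l (insert b A), X S|
      ≤ B * ((n - A.card - 2).choose (l - A.card - 1)) := by
  set F1 := (sups l (insert a A)).filter (fun S => b ∈ S) with hF1
  set F2 := (sups l (insert a A)).filter (fun S => b ∉ S) with hF2
  set G1 := (sups l (insert b A)).filter (fun S => a ∈ S) with hG1
  set G2 := (sups l (insert b A)).filter (fun S => a ∉ S) with hG2
  have hFG1 : F1 = G1 := by
    ext S
    simp only [hF1, hG1, Finset.mem_filter, _root_.mem_sups, Finset.insert_subset_iff]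
    tauto
  have hsplitF : ∑ S ∈ sups l (insert a A), X S = ∑ S ∈ F1, X S + ∑ S ∈ F2, X S :=
    (Finset.sum_filter_add_sum_filter_not _ _ _).symm
  have hsplitG : ∑ S ∈ sups l (insert b A), X S = ∑ S ∈ G1, X S + ∑ S ∈ G2, X S :=
    (Finset.sum_filter_add_sum_filter_not _ _ _).symm
  -- reindex G2 as image of F2 under the swap
  have hmem : ∀ S ∈ F2, S.card = l ∧ a ∈ S ∧ A ⊆ S ∧ b ∉ S := by
    intro S hS
    simp only [hF2, Finset.mem_filter, _root_.mem_sups, Finset.insert_subset_iff] at hS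
    tauto
  have hreindex : ∑ S ∈ G2, X S = ∑ S ∈ F2, X (insert b (S.erase a)) := by
    apply Finset.sum_nbij' (fun T => insert a (T.erase b)) (fun S => insert b (S.erase a))
    · -- maps G2 into F2
      intro T hT
      simp only [hG2, Finset.mem_filter, _root_.mem_sups, Finset.insert_subset_iff] at hT
      obtain ⟨⟨hcard, hbT, hAT⟩, haT⟩ := hT
      have hbet : b ∉ T.erase b := Finset.notMem_erase b T
      have haet : a ∉ T.erase b := fun h => haT (Finset.mem_of_mem_erase h)
      simp only [hF2, Finset.mem_filter, _root_.mem_sups, Finset.insert_subset_iff]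
      refine ⟨⟨?_, Finset.mem_insert_self a _, fun x hx => ?_⟩, ?_⟩
      · rw [Finset.card_insert_of_notMem haet, Finset.card_erase_of_mem hbT, hcard]
        have : 1 ≤ l := by omega
        omega
      · apply Finset.mem_insert_of_mem
        rw [Finset.mem_erase]
        exact ⟨fun hxb => hb (hxb ▸ hx), hAT hx⟩
      · simp only [Finset.mem_insert]
        push_neg
        exact ⟨fun h => hab h.symm, hbet⟩
    · intro S hS
      obtain ⟨hcard, haS, hAS, hbS⟩ := hmem S hS
      have haes : a ∉ S.erase a := Finset.notMem_erase a S
      have hbes : b ∉ S.erase a := fun h => hbS (Finset.mem_of_mem_erase h)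
      simp only [hG2, Finset.mem_filter, _root_.mem_sups, Finset.insert_subset_iff]
      refine ⟨⟨?_, Finset.mem_insert_self b _, fun x hx => ?_⟩, ?_⟩
      · rw [Finset.card_insert_of_notMem hbes, Finset.card_erase_of_mem haS, hcard]
        have : 1 ≤ l := by omega
        omega
      · apply Finset.mem_insert_of_mem
        rw [Finset.mem_erase]
        exact ⟨fun hxa => ha (hxa ▸ hx), hAS hx⟩
      · simp only [Finset.mem_insert]
        push_neg
        exact ⟨hab, haes⟩
    · intro T hT
      simp only [hG2, Finset.mem_filter, _root_.mem_sups, Finset.insert_subset_iff] at hT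
      obtain ⟨⟨hcard, hbT, hAT⟩, haT⟩ := hT
      have haet : a ∉ T.erase b := fun h => haT (Finset.mem_of_mem_erase h)
      rw [Finset.erase_insert haet, Finset.insert_erase hbT]
    · intro S hS
      obtain ⟨hcard, haS, hAS, hbS⟩ := hmem S hS
      have hbes : b ∉ S.erase a := fun h => hbS (Finset.mem_of_mem_erase h)
      rw [Finset.erase_insert hbes, Finset.insert_erase haS]
    · intro T hT
      simp only [hG2, Finset.mem_filter, _root_.mem_sups, Finset.insert_subset_iff] at hT
      obtain ⟨⟨hcard, hbT, hAT⟩, haT⟩ := hT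
      have haet : a ∉ T.erase b := fun h => haT (Finset.mem_of_mem_erase h)
      rw [Finset.erase_insert haet, Finset.insert_erase hbT]
  have hbound : |∑ S ∈ F2, X S - ∑ S ∈ F2, X (insert b (S.erase a))| ≤ B * F2.card := by
    rw [← Finset.sum_sub_distrib]
    calc |∑ S ∈ F2, (X S - X (insert b (S.erase a)))|
        ≤ ∑ S ∈ F2, |X S - X (insert b (S.erase a))| := Finset.abs_sum_le_sum_abs _ _
      _ ≤ ∑ _S ∈ F2, B := by
          apply Finset.sum_le_sum
          intro S hS
          obtain ⟨hcard, haS, hAS, hbS⟩ := hmem S hS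
          exact hswap S hcard a haS b hbS
      _ = B * F2.card := by rw [Finset.sum_const, nsmul_eq_mul]; ring
  have hcardF2 : F2.card = (n - A.card - 2).choose (l - A.card - 1) := by
    have hbins : b ∉ insert a A := by
      simp only [Finset.mem_insert]
      push_neg
      exact ⟨fun h => hab h.symm, hb⟩
    have := card_sups_not (l := l) (insert a A) (by rw [Finset.card_insert_of_notMem ha]; omega) b hbins
    rw [hF2, this, Finset.card_insert_of_notMem ha]
    congr 1 <;> omega
  calc |∑ S ∈ sups l (insert a A), X S - ∑ S ∈ sups l (insert b A), X S|
      = |∑ S ∈ F2, X S - ∑ S ∈ F2, X (insert b (S.erase a))| := by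
        rw [hsplitF, hsplitG, hFG1, hreindex]
        ring_nf
    _ ≤ B * F2.card := hbound
    _ = B * ((n - A.card - 2).choose (l - A.card - 1)) := by rw [hcardF2]

def havg (X : Finset (Fin n) → ℝ) (l : ℕ) (A : Finset (Fin n)) : ℝ :=
  (∑ S ∈ sups l A, X S) / ((n - A.card).choose (l - A.card))

lemma havg_insert (X : Finset (Fin n) → ℝ) {l : ℕ} (A : Finset (Fin n)) {a : Fin n} (ha : a ∉ A) :
    havg X l (insert a A)
      = (∑ S ∈ sups l (insert a A), X S) / ((n - A.card - 1).choose (l - A.card - 1)) := by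
  rw [havg, Finset.card_insert_of_notMem ha]
  congr 2 <;> omega

lemma havg_tower (X : Finset (Fin n) → ℝ) {l : ℕ} (A : Finset (Fin n))
    (hA : A.card < l) (hln : l ≤ n) :
    ∑ a ∈ Aᶜ, (havg X l (insert a A) - havg X l A) = 0 := by
  set k := A.card with hk
  have hkn : k < n := lt_of_lt_of_le hA hln
  have hCpos : 0 < (n - k).choose (l - k) := Nat.choose_pos (by omega)
  have hC'pos : 0 < (n - k - 1).choose (l - k - 1) := Nat.choose_pos (by omega)
  have hid : (n - k) * (n - k - 1).choose (l - k - 1) = (n - k).choose (l - k) * (l - k) := by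
    have h2 := Nat.add_one_mul_choose_eq (n - k - 1) (l - k - 1)
    have e1 : (n - k - 1) + 1 = n - k := by omega
    have e2 : (l - k - 1) + 1 = l - k := by omega
    rw [e1, e2] at h2
    exact h2
  have hins : ∀ a ∈ Aᶜ, havg X l (insert a A)
      = (∑ S ∈ sups l (insert a A), X S) / (((n - k - 1).choose (l - k - 1) : ℕ) : ℝ) := by
    intro a ha
    exact havg_insert X A (Finset.mem_compl.mp ha)
  rw [Finset.sum_sub_distrib, Finset.sum_congr rfl hins, ← Finset.sum_div,
    sum_sups_insert A X, Finset.sum_const, Finset.card_compl, Fintype.card_fin, nsmul_eq_mul, havg]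
  have hC : (((n - k).choose (l - k) : ℕ) : ℝ) ≠ 0 := by
    exact_mod_cast hCpos.ne'
  have hC' : (((n - k - 1).choose (l - k - 1) : ℕ) : ℝ) ≠ 0 := by
    exact_mod_cast hC'pos.ne'
  have hcast : ((n - k : ℕ) : ℝ) * ((n - k - 1).choose (l - k - 1) : ℝ)
      = ((n - k).choose (l - k) : ℝ) * ((l - k : ℕ) : ℝ) := by
    exact_mod_cast congrArg (Nat.cast : ℕ → ℝ) hid
  field_simp
  simp only [← hk]
  rw [mul_comm (((n - k - 1).choose (l - k - 1) : ℕ) : ℝ), hcast, mul_div_cancel_left₀ _ hC]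
  ring

lemma havg_range (X : Finset (Fin n) → ℝ) {l : ℕ} (B : ℝ) (hB : 0 ≤ B)
    (hswap : ∀ S : Finset (Fin n), S.card = l → ∀ a ∈ S, ∀ b, b ∉ S →
      |X S - X (insert b (S.erase a))| ≤ B)
    (A : Finset (Fin n)) (hA : A.card < l) (hln : l < n)
    (a b : Fin n) (ha : a ∉ A) (hb : b ∉ A) :
    |havg X l (insert a A) - havg X l (insert b A)|
      ≤ B * ((n - l : ℕ) : ℝ) / ((n - A.card - 1 : ℕ) : ℝ) := by
  set k := A.card with hk
  have hden : (0:ℝ) < ((n - k - 1 : ℕ) : ℝ) := by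
    have : 1 ≤ n - k - 1 := by omega
    exact_mod_cast Nat.lt_of_lt_of_le Nat.zero_lt_one this
  rcases eq_or_ne a b with rfl | hab
  · rw [sub_self, abs_zero]
    positivity
  · have hC'pos : 0 < (n - k - 1).choose (l - k - 1) := Nat.choose_pos (by omega)
    have hC' : (((n - k - 1).choose (l - k - 1) : ℕ) : ℝ) ≠ 0 := by
      exact_mod_cast hC'pos.ne'
    have hkey := sum_sups_swap X B hswap A (by omega) a b ha hb hab
    rw [← hk] at hkey
    have habs : |(((n - k - 1).choose (l - k - 1) : ℕ) : ℝ)|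
        = (((n - k - 1).choose (l - k - 1) : ℕ) : ℝ) :=
      abs_of_pos (by exact_mod_cast hC'pos)
    rw [havg_insert X A ha, havg_insert X A hb, ← hk, div_sub_div_same, abs_div, habs,
      div_le_div_iff₀ (by exact_mod_cast hC'pos) hden]
    have hid := nat_choose_id (n - k - 1) (l - k - 1) (by omega)
    have e1 : (n - k - 1) - (l - k - 1) = n - l := by omega
    have e2 : (n - k - 1) - 1 = n - k - 2 := by omega
    rw [e1, e2] at hid
    have hcast : ((n - l : ℕ) : ℝ) * ((n - k - 1).choose (l - k - 1) : ℝ)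
        = ((n - k - 1 : ℕ) : ℝ) * ((n - k - 2).choose (l - k - 1) : ℝ) := by
      exact_mod_cast congrArg (Nat.cast : ℕ → ℝ) hid
    calc |∑ S ∈ sups l (insert a A), X S - ∑ S ∈ sups l (insert b A), X S|
          * ((n - k - 1 : ℕ) : ℝ)
        ≤ (B * ((n - k - 2).choose (l - k - 1))) * ((n - k - 1 : ℕ) : ℝ) :=
          mul_le_mul_of_nonneg_right hkey hden.le
      _ = B * ((n - l : ℕ) : ℝ) * ((n - k - 1).choose (l - k - 1) : ℝ) := by
          linear_combination (-B) * hcast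

lemma main_ind (X : Finset (Fin n) → ℝ) {l : ℕ} (B s : ℝ) (hB : 0 ≤ B)
    (hswap : ∀ S : Finset (Fin n), S.card = l → ∀ a ∈ S, ∀ b, b ∉ S →
      |X S - X (insert b (S.erase a))| ≤ B)
    (hln : l < n) :
    ∀ (j : ℕ) (A : Finset (Fin n)), A.card + j = l →
      ∑ S ∈ sups l A, Real.exp (s * (X S - havg X l A))
        ≤ ((n - A.card).choose j : ℝ) * Real.exp (s ^ 2 *
            (∑ m ∈ Finset.range j, (B * ((n - l : ℕ) : ℝ) / (((n - l : ℕ) : ℝ) + m)) ^ 2) / 8) := by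
  intro j
  induction j with
  | zero =>
    intro A hA
    have hAl : A.card = l := by omega
    have hsl : sups l A = {A} := by
      ext S
      rw [_root_.mem_sups, Finset.mem_singleton]
      constructor
      · rintro ⟨hc, hsub⟩
        exact (Finset.eq_of_subset_of_card_le hsub (by omega)).symm
      · rintro rfl
        exact ⟨hAl, subset_rfl⟩
    have hhavg : havg X l A = X A := by
      rw [havg, hsl, Finset.sum_singleton, hAl, Nat.sub_self, Nat.choose_zero_right]
      simp
    rw [hsl, Finset.sum_singleton, hhavg, sub_self, mul_zero, Real.exp_zero]
    simp
  | succ j ih =>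
    intro A hA
    set k := A.card with hk
    have hkl : k < l := by omega
    have hkn : k < n := by omega
    have hcompl_card : Aᶜ.card = n - k := by
      rw [Finset.card_compl, Fintype.card_fin]
    have hne : Aᶜ.Nonempty := by
      rw [← Finset.card_pos, hcompl_card]; omega
    set d : Fin n → ℝ := fun a => havg X l (insert a A) - havg X l A with hd
    have hzero : ∑ a ∈ Aᶜ, d a = 0 := havg_tower X A hkl hln.le
    set c : ℝ := B * ((n - l : ℕ) : ℝ) / ((n - k - 1 : ℕ) : ℝ) with hc
    have hc0 : 0 ≤ c := by
      rw [hc]; positivity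
    clear_value c
    clear_value d
    obtain ⟨amin, hamin, hmin⟩ := Finset.exists_min_image Aᶜ d hne
    obtain ⟨amax, hamax, hmax⟩ := Finset.exists_max_image Aᶜ d hne
    have hdle : ∀ a ∈ Aᶜ, d amin ≤ d a ∧ d a ≤ d amax :=
      fun a ha => ⟨hmin a ha, hmax a ha⟩
    have hMm : d amax - d amin ≤ c := by
      have hr := havg_range X B hB hswap A hkl hln amax amin
        (Finset.mem_compl.mp hamax) (Finset.mem_compl.mp hamin)
      rw [← hk, ← hc] at hr
      calc d amax - d amin
          = havg X l (insert amax A) - havg X l (insert amin A) := by simp only [hd]; ring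
        _ ≤ |havg X l (insert amax A) - havg X l (insert amin A)| := le_abs_self _
        _ ≤ c := hr
    have hMm0 : 0 ≤ d amax - d amin := by
      have := hmax amin hamin
      linarith
    have hHoeff : ∑ a ∈ Aᶜ, Real.exp (s * d a)
        ≤ ((n - k : ℕ) : ℝ) * Real.exp (s ^ 2 * c ^ 2 / 8) := by
      have h1 := hoeff_finset Aᶜ hne d hzero (d amin) (d amax) hdle s
      rw [hcompl_card] at h1
      have h2 : Real.exp (s ^ 2 * (d amax - d amin) ^ 2 / 8) ≤ Real.exp (s ^ 2 * c ^ 2 / 8) := by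
        apply Real.exp_le_exp.mpr
        have hsq : (d amax - d amin) ^ 2 ≤ c ^ 2 := by nlinarith
        have h8 : 0 ≤ s ^ 2 := sq_nonneg s
        have := mul_le_mul_of_nonneg_left hsq h8
        linarith
      calc ∑ a ∈ Aᶜ, Real.exp (s * d a)
          ≤ ((n - k : ℕ) : ℝ) * Real.exp (s ^ 2 * (d amax - d amin) ^ 2 / 8) := h1
        _ ≤ ((n - k : ℕ) : ℝ) * Real.exp (s ^ 2 * c ^ 2 / 8) := by
            apply mul_le_mul_of_nonneg_left h2 (by positivity)
    have hC1pos : 0 < (n - k - 1).choose j := Nat.choose_pos (by omega)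
    have hchoose : (n - k) * (n - k - 1).choose j = (n - k).choose (j + 1) * (j + 1) := by
      have h3 := Nat.add_one_mul_choose_eq (n - k - 1) j
      have e1 : n - k - 1 + 1 = n - k := by omega
      rw [e1] at h3
      exact h3
    have hcden : ((n - k - 1 : ℕ) : ℝ) = ((n - l : ℕ) : ℝ) + j := by
      have e : (n - k - 1 : ℕ) = (n - l) + j := by omega
      rw [e]; push_cast; ring
    set Vj : ℝ := ∑ m ∈ Finset.range j, (B * ((n - l : ℕ) : ℝ) / (((n - l : ℕ) : ℝ) + m)) ^ 2
      with hVj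
    have hVj0 : 0 ≤ Vj := by
      rw [hVj]; positivity
    set Ej : ℝ := Real.exp (s ^ 2 * Vj / 8) with hEj
    have hsum_succ : ∑ m ∈ Finset.range (j + 1),
        (B * ((n - l : ℕ) : ℝ) / (((n - l : ℕ) : ℝ) + m)) ^ 2 = Vj + c ^ 2 := by
      rw [Finset.sum_range_succ, hVj, hc, hcden]
    have hcast : ((n - k : ℕ) : ℝ) * ((n - k - 1).choose j : ℝ)
        = ((n - k).choose (j + 1) : ℝ) * ((j : ℝ) + 1) := by
      exact_mod_cast congrArg (Nat.cast : ℕ → ℝ) hchoose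
    have key : ((j : ℝ) + 1) * (∑ S ∈ sups l A, Real.exp (s * (X S - havg X l A)))
        ≤ ((j : ℝ) + 1) * (((n - k).choose (j + 1) : ℝ)
            * Real.exp (s ^ 2 * (Vj + c ^ 2) / 8)) := by
      have hlk : ((l - k : ℕ) : ℝ) = (j : ℝ) + 1 := by
        have : (l - k : ℕ) = j + 1 := by omega
        rw [this]; push_cast; ring
      calc ((j : ℝ) + 1) * (∑ S ∈ sups l A, Real.exp (s * (X S - havg X l A)))
          = ((l - k : ℕ) : ℝ) * ∑ S ∈ sups l A, Real.exp (s * (X S - havg X l A)) := by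
            rw [hlk]
        _ = ∑ a ∈ Aᶜ, ∑ S ∈ sups l (insert a A), Real.exp (s * (X S - havg X l A)) :=
            (sum_sups_insert A _).symm
        _ = ∑ a ∈ Aᶜ, Real.exp (s * d a)
              * ∑ S ∈ sups l (insert a A), Real.exp (s * (X S - havg X l (insert a A))) := by
            apply Finset.sum_congr rfl
            intro a _
            rw [Finset.mul_sum]
            apply Finset.sum_congr rfl
            intro S _
            rw [← Real.exp_add]
            congr 1
            simp only [hd]
            ring
        _ ≤ ∑ a ∈ Aᶜ, Real.exp (s * d a) * (((n - k - 1).choose j : ℝ) * Ej) := by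
            apply Finset.sum_le_sum
            intro a ha
            apply mul_le_mul_of_nonneg_left _ (Real.exp_pos _).le
            have hcard : (insert a A).card + j = l := by
              rw [Finset.card_insert_of_notMem (Finset.mem_compl.mp ha)]
              omega
            have hih := ih (insert a A) hcard
            rw [Finset.card_insert_of_notMem (Finset.mem_compl.mp ha)] at hih
            have e : n - (A.card + 1) = n - k - 1 := by omega
            rw [e] at hih
            exact hih
        _ = (∑ a ∈ Aᶜ, Real.exp (s * d a)) * (((n - k - 1).choose j : ℝ) * Ej) :=
            (Finset.sum_mul _ _ _).symm
        _ ≤ ((n - k : ℕ) : ℝ) * Real.exp (s ^ 2 * c ^ 2 / 8)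
              * (((n - k - 1).choose j : ℝ) * Ej) := by
            apply mul_le_mul_of_nonneg_right hHoeff (by positivity)
        _ = ((j : ℝ) + 1) * (((n - k).choose (j + 1) : ℝ)
              * Real.exp (s ^ 2 * (Vj + c ^ 2) / 8)) := by
            have hexp : Real.exp (s ^ 2 * (Vj + c ^ 2) / 8)
                = Ej * Real.exp (s ^ 2 * c ^ 2 / 8) := by
              rw [hEj, ← Real.exp_add]
              congr 1
              ring
            rw [hexp]
            linear_combination Real.exp (s ^ 2 * c ^ 2 / 8) * Ej * hcast
    have hj1 : (0 : ℝ) < (j : ℝ) + 1 := by positivity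
    have := le_of_mul_le_mul_left key hj1
    rw [hsum_succ]
    exact this

def sigR (n l : ℕ) : ℝ :=
  ∑ m ∈ Finset.range l, (((n - l : ℕ) : ℝ) / (((n - l : ℕ) : ℝ) + m)) ^ 2

lemma sups_empty {l : ℕ} :
    sups l (∅ : Finset (Fin n)) = Finset.powersetCard l (Finset.univ : Finset (Fin n)) := by
  ext S
  simp [sups]

lemma chernoff (X : Finset (Fin n) → ℝ) {l : ℕ} (B : ℝ) (hB0 : 0 ≤ B)
    (hswap : ∀ S : Finset (Fin n), S.card = l → ∀ a ∈ S, ∀ b, b ∉ S →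
      |X S - X (insert b (S.erase a))| ≤ B)
    (hln : l < n) (t : ℝ) (ht : 0 < t) (hV : 0 < B ^ 2 * sigR n l) :
    (((Finset.powersetCard l (Finset.univ : Finset (Fin n))).filter
        (fun S => havg X l ∅ + t ≤ X S)).card : ℝ)
      ≤ (n.choose l : ℝ) * Real.exp (-2 * t ^ 2 / (B ^ 2 * sigR n l)) := by
  set V := B ^ 2 * sigR n l with hVdef
  set s := 4 * t / V with hs
  have hs0 : 0 < s := by rw [hs]; positivity
  have hmain := main_ind X B s hB0 hswap hln l ∅ (by simp)
  rw [sups_empty] at hmain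
  simp only [Finset.card_empty, Nat.sub_zero] at hmain
  have hVeq : ∑ m ∈ Finset.range l, (B * ((n - l : ℕ) : ℝ) / (((n - l : ℕ) : ℝ) + m)) ^ 2 = V := by
    rw [hVdef, sigR, Finset.mul_sum]
    apply Finset.sum_congr rfl
    intro m _
    ring
  rw [hVeq] at hmain
  set μ := havg X l (∅ : Finset (Fin n)) with hμ
  set P := Finset.powersetCard l (Finset.univ : Finset (Fin n)) with hP
  set bad := P.filter (fun S => μ + t ≤ X S) with hbad
  have h1 : (bad.card : ℝ) * Real.exp (s * t) ≤ ∑ S ∈ bad, Real.exp (s * (X S - μ)) := by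
    calc (bad.card : ℝ) * Real.exp (s * t) = ∑ _S ∈ bad, Real.exp (s * t) := by
          rw [Finset.sum_const, nsmul_eq_mul]
      _ ≤ ∑ S ∈ bad, Real.exp (s * (X S - μ)) := by
          apply Finset.sum_le_sum
          intro S hS
          apply Real.exp_le_exp.mpr
          have hXS : μ + t ≤ X S := by
            rw [hbad] at hS
            exact (Finset.mem_filter.mp hS).2
          apply mul_le_mul_of_nonneg_left _ hs0.le
          linarith
  have h2 : ∑ S ∈ bad, Real.exp (s * (X S - μ)) ≤ ∑ S ∈ P, Real.exp (s * (X S - μ)) := by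
    apply Finset.sum_le_sum_of_subset_of_nonneg (Finset.filter_subset _ _)
    intro S _ _
    exact (Real.exp_pos _).le
  have h3 : (bad.card : ℝ) * Real.exp (s * t) ≤ (n.choose l : ℝ) * Real.exp (s ^ 2 * V / 8) :=
    le_trans h1 (le_trans h2 hmain)
  have hexp : Real.exp (s ^ 2 * V / 8) / Real.exp (s * t) = Real.exp (-2 * t ^ 2 / V) := by
    rw [← Real.exp_sub]
    congr 1
    rw [hs]
    field_simp
    ring
  have hE : (0 : ℝ) < Real.exp (s * t) := Real.exp_pos _
  have h4 : (bad.card : ℝ) ≤ (n.choose l : ℝ) * Real.exp (s ^ 2 * V / 8) / Real.exp (s * t) := by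
    rw [le_div_iff₀ hE]
    exact h3
  rwa [mul_div_assoc, hexp] at h4

lemma sigR_le (n l : ℕ) (hl : 1 ≤ l) (hln : l < n) :
    sigR n l ≤ ((l : ℝ) * ((n - l : ℕ) : ℝ) / ((l : ℝ) + ((n - l : ℕ) : ℝ) - 0.5))
      * (1 / (1 - 1 / (2 * ((n - l : ℕ) : ℝ)))) := by
  set u : ℝ := ((n - l : ℕ) : ℝ) with hu
  have hu1 : (1 : ℝ) ≤ u := by
    rw [hu]
    exact_mod_cast (by omega : 1 ≤ n - l)
  have hl1 : (1 : ℝ) ≤ (l : ℝ) := by exact_mod_cast hl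
  set f : ℕ → ℝ := fun m => u ^ 2 / (u + m - 1 / 2) with hf
  have hterm : ∀ m ∈ Finset.range l, (u / (u + m)) ^ 2 ≤ f m - f (m + 1) := by
    intro m _
    have hm0 : (0 : ℝ) ≤ (m : ℝ) := Nat.cast_nonneg m
    have h1 : (0 : ℝ) < u + m - 1 / 2 := by linarith
    have h2 : (0 : ℝ) < u + ((m : ℕ) + 1 : ℕ) - 1 / 2 := by push_cast; linarith
    have h3 : (0 : ℝ) < u + m := by linarith
    rw [hf]
    simp only []
    push_cast
    rw [div_sub_div _ _ (by linarith : (u + (m:ℝ) - 1/2) ≠ 0) (by push_cast at h2; linarith : (u + ((m:ℝ) + 1) - 1/2) ≠ 0)]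
    rw [div_pow, div_le_div_iff₀ (by positivity) (by push_cast at h2; nlinarith)]
    nlinarith [sq_nonneg u, sq_nonneg (u + (m:ℝ)), mul_pos h1 h3]
  calc sigR n l ≤ ∑ m ∈ Finset.range l, (f m - f (m + 1)) := Finset.sum_le_sum hterm
    _ = f 0 - f l := Finset.sum_range_sub' f l
    _ = ((l : ℝ) * u / ((l : ℝ) + u - 0.5)) * (1 / (1 - 1 / (2 * u))) := by
        rw [hf]
        simp only []
        push_cast
        rw [show (0.5 : ℝ) = 1 / 2 by norm_num]
        have d1 : u + (0:ℝ) - 1/2 ≠ 0 := by norm_num; linarith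
        have d2 : u + (l:ℝ) - 1/2 ≠ 0 := by
          have : (0:ℝ) < u + (l:ℝ) - 1/2 := by linarith
          exact this.ne'
        have d3 : (l:ℝ) + u - 1/2 ≠ 0 := by
          have : (0:ℝ) < (l:ℝ) + u - 1/2 := by linarith
          exact this.ne'
        have d4 : 1 - 1 / (2 * u) ≠ 0 := by
          have h2u : (0:ℝ) < 2 * u := by linarith
          have : 1 / (2 * u) ≤ 1 / 2 := by
            rw [div_le_div_iff₀ h2u (by norm_num)]
            linarith
          have : (0:ℝ) < 1 - 1 / (2 * u) := by linarith
          exact this.ne'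
        have hu0 : u ≠ 0 := by linarith
        have h5 : (-1 + u * 2) ≠ 0 := by intro hx; nlinarith
        have h6 : (-1 + u * 2 + (l : ℝ) * 2) ≠ 0 := by intro hx; nlinarith
        have h7 : (1 - u * 4 + u * (l : ℝ) * 4 + (u ^ 2 * 4 - (l : ℝ) * 2)) ≠ 0 := by
          intro hx
          have hfac : (1 - u * 4 + u * (l : ℝ) * 4 + (u ^ 2 * 4 - (l : ℝ) * 2))
              = (-1 + u * 2) * (-1 + u * 2 + (l : ℝ) * 2) := by ring
          rw [hfac] at hx
          rcases mul_eq_zero.mp hx with h | h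
          exacts [h5 h, h6 h]
        have hA : u * 2 - 1 ≠ 0 := by intro hx; nlinarith
        have hB : (u + (l : ℝ)) * 2 - 1 ≠ 0 := by intro hx; nlinarith
        have hC : ((l : ℝ) + u) * 2 - 1 ≠ 0 := by intro hx; nlinarith
        have hD : 2 * u - 1 ≠ 0 := by intro hx; nlinarith
        field_simp
        have e1 : (u + 0) * 2 - 1 ≠ 0 := by intro hx; nlinarith
        have e2 : 2 * (u + l) - 1 ≠ 0 := by intro hx; nlinarith
        have e3 : 2 * (l + u) - 1 ≠ 0 := by intro hx; nlinarith
        field_simp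
        ring

lemma sigR_pos (n l : ℕ) (hl : 1 ≤ l) (hln : l < n) : 0 < sigR n l := by
  have hu : (1 : ℝ) ≤ ((n - l : ℕ) : ℝ) := by exact_mod_cast (by omega : 1 ≤ n - l)
  have h0 : (0:ℝ) < (((n - l : ℕ) : ℝ) / (((n - l : ℕ) : ℝ) + (0 : ℕ))) ^ 2 := by
    push_cast
    rw [add_zero]
    have : ((n - l : ℕ) : ℝ) / ((n - l : ℕ) : ℝ) = 1 := div_self (by linarith)
    rw [this]
    norm_num
  calc (0:ℝ) < (((n - l : ℕ) : ℝ) / (((n - l : ℕ) : ℝ) + (0 : ℕ))) ^ 2 := h0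
    _ ≤ sigR n l := by
        apply Finset.single_le_sum (f := fun m : ℕ => (((n - l : ℕ) : ℝ) / (((n - l : ℕ) : ℝ) + m)) ^ 2)
        · intro i _
          positivity
        · exact Finset.mem_range.mpr (by omega)

lemma conc_count (X : Finset (Fin n) → ℝ) {l : ℕ} (B : ℝ) (hB : 0 < B)
    (hswap : ∀ S : Finset (Fin n), S.card = l → ∀ a ∈ S, ∀ b, b ∉ S →
      |X S - X (insert b (S.erase a))| ≤ B)
    (hl : 1 ≤ l) (hln : l < n) (t : ℝ) (ht : 0 < t) (piR : ℝ) (hσπ : sigR n l ≤ piR) :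
    (((Finset.powersetCard l (Finset.univ : Finset (Fin n))).filter
        (fun S => havg X l ∅ + t ≤ X S)).card : ℝ)
      ≤ (n.choose l : ℝ) * Real.exp (-2 * t ^ 2 / (B ^ 2 * piR)) := by
  have hσ := sigR_pos n l hl hln
  have hV : 0 < B ^ 2 * sigR n l := by positivity
  have h1 := chernoff X B hB.le hswap hln t ht hV
  have hπ : 0 < piR := lt_of_lt_of_le hσ hσπ
  have h2 : Real.exp (-2 * t ^ 2 / (B ^ 2 * sigR n l)) ≤ Real.exp (-2 * t ^ 2 / (B ^ 2 * piR)) := by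
    apply Real.exp_le_exp.mpr
    rw [div_le_div_iff₀ hV (by positivity)]
    nlinarith [sq_nonneg t, sq_nonneg B, mul_le_mul_of_nonneg_left hσπ (by positivity : (0:ℝ) ≤ B^2)]
  calc _ ≤ (n.choose l : ℝ) * Real.exp (-2 * t ^ 2 / (B ^ 2 * sigR n l)) := h1
    _ ≤ (n.choose l : ℝ) * Real.exp (-2 * t ^ 2 / (B ^ 2 * piR)) := by
        apply mul_le_mul_of_nonneg_left h2 (by positivity)

lemma compl_swap {S : Finset (Fin n)} {a b : Fin n} (ha : a ∈ S) (hb : b ∉ S) :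
    (insert b (S.erase a))ᶜ = insert a (Sᶜ.erase b) := by
  have hab : a ≠ b := fun h => hb (h ▸ ha)
  ext x
  simp only [Finset.mem_compl, Finset.mem_insert, Finset.mem_erase]
  by_cases hxa : x = a <;> by_cases hxb : x = b
  · exact absurd (hxa ▸ hxb.symm ▸ rfl) hab
  · subst hxa; simp [hab, ha, hb]
  · subst hxb; simp [hxa, hb]
  · simp [hxa, hxb]

lemma mu_le {l u : ℕ} (hn : l + u = n) (hl : 1 ≤ l) (hu : 1 ≤ u)
    (loss : Finset (Fin n) → Fin n → ℝ) (β : ℝ)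
    (hst : ∀ S : Finset (Fin n), S.card = l → ∀ i j : Fin n, i ∉ S → j ∈ S →
      loss S i ≤ loss (insert i (S.erase j)) i + β) :
    havg (fun S => (1 / (u : ℝ)) * ∑ i ∈ Sᶜ, loss S i
      - (1 / (l : ℝ)) * ∑ i ∈ S, loss S i) l ∅ ≤ β := by
  set P := Finset.powersetCard l (Finset.univ : Finset (Fin n)) with hP
  have hmemP : ∀ S : Finset (Fin n), S ∈ P ↔ S.card = l := by
    intro S; rw [hP, Finset.mem_powersetCard_univ]
  have hNpos : 0 < n.choose l := Nat.choose_pos (by omega)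
  have hN : (0:ℝ) < (n.choose l : ℝ) := by exact_mod_cast hNpos
  have hcardP : P.card = n.choose l := by
    rw [hP, Finset.card_powersetCard, Finset.card_univ, Fintype.card_fin]
  have hcompl : ∀ S ∈ P, Sᶜ.card = u := by
    intro S hS
    rw [Finset.card_compl, Fintype.card_fin, (hmemP S).mp hS]
    omega
  set Sout := ∑ S ∈ P, ∑ i ∈ Sᶜ, loss S i with hSout
  set Sin := ∑ S ∈ P, ∑ i ∈ S, loss S i with hSin
  -- triple sum inequality
  have h1 : (l : ℝ) * Sout = ∑ S ∈ P, ∑ i ∈ Sᶜ, ∑ _j ∈ S, loss S i := by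
    rw [hSout, Finset.mul_sum]
    apply Finset.sum_congr rfl
    intro S hS
    rw [Finset.mul_sum]
    apply Finset.sum_congr rfl
    intro i _
    rw [Finset.sum_const, nsmul_eq_mul, (hmemP S).mp hS]
  have h2 : ∑ S ∈ P, ∑ i ∈ Sᶜ, ∑ j ∈ S, loss S i
      ≤ ∑ S ∈ P, ∑ i ∈ Sᶜ, ∑ j ∈ S, (loss (insert i (S.erase j)) i + β) := by
    apply Finset.sum_le_sum; intro S hS
    apply Finset.sum_le_sum; intro i hi
    apply Finset.sum_le_sum; intro j hj
    exact hst S ((hmemP S).mp hS) i j (Finset.mem_compl.mp hi) hj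
  have h3 : ∑ S ∈ P, ∑ i ∈ Sᶜ, ∑ j ∈ S, (loss (insert i (S.erase j)) i + β)
      = (∑ S ∈ P, ∑ i ∈ Sᶜ, ∑ j ∈ S, loss (insert i (S.erase j)) i)
        + (n.choose l : ℝ) * ((u : ℝ) * ((l : ℝ) * β)) := by
    have hS3 : ∀ S ∈ P, ∑ i ∈ Sᶜ, ∑ j ∈ S, (loss (insert i (S.erase j)) i + β)
        = (∑ i ∈ Sᶜ, ∑ j ∈ S, loss (insert i (S.erase j)) i) + (u : ℝ) * ((l : ℝ) * β) := by
      intro S hS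
      calc ∑ i ∈ Sᶜ, ∑ j ∈ S, (loss (insert i (S.erase j)) i + β)
          = ∑ i ∈ Sᶜ, ((∑ j ∈ S, loss (insert i (S.erase j)) i) + (l : ℝ) * β) := by
            apply Finset.sum_congr rfl
            intro i _
            rw [Finset.sum_add_distrib, Finset.sum_const, nsmul_eq_mul, (hmemP S).mp hS]
        _ = (∑ i ∈ Sᶜ, ∑ j ∈ S, loss (insert i (S.erase j)) i) + (u : ℝ) * ((l : ℝ) * β) := by
            rw [Finset.sum_add_distrib, Finset.sum_const, nsmul_eq_mul, hcompl S hS]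
    rw [Finset.sum_congr rfl hS3, Finset.sum_add_distrib, Finset.sum_const, nsmul_eq_mul, hcardP]
  -- reindexing the swapped triple sum
  have h4 : ∑ S ∈ P, ∑ i ∈ Sᶜ, ∑ j ∈ S, loss (insert i (S.erase j)) i = (u : ℝ) * Sin := by
    have hsig1 : ∑ S ∈ P, ∑ i ∈ Sᶜ, ∑ j ∈ S, loss (insert i (S.erase j)) i
        = ∑ x ∈ P.sigma (fun S => Sᶜ ×ˢ S), loss (insert x.2.1 (x.1.erase x.2.2)) x.2.1 := by
      rw [Finset.sum_sigma]
      apply Finset.sum_congr rfl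
      intro S _
      rw [Finset.sum_product]
    have hsig2 : ∑ S ∈ P, ∑ i ∈ S, ∑ _j ∈ Sᶜ, loss S i
        = ∑ x ∈ P.sigma (fun T => T ×ˢ Tᶜ), loss x.1 x.2.1 := by
      rw [Finset.sum_sigma]
      apply Finset.sum_congr rfl
      intro S _
      rw [Finset.sum_product]
    have hbij : ∑ x ∈ P.sigma (fun S => Sᶜ ×ˢ S), loss (insert x.2.1 (x.1.erase x.2.2)) x.2.1
        = ∑ x ∈ P.sigma (fun T => T ×ˢ Tᶜ), loss x.1 x.2.1 := by
      apply Finset.sum_nbij' (fun x => ⟨insert x.2.1 (x.1.erase x.2.2), x.2⟩)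
        (fun x => ⟨insert x.2.2 (x.1.erase x.2.1), x.2⟩)
      · rintro ⟨S, i, j⟩ hx
        rw [Finset.mem_sigma, Finset.mem_product] at hx
        obtain ⟨hSP, hi, hj⟩ := hx
        simp only [Finset.mem_compl] at hi
        have hij : j ≠ i := fun h => hi (h ▸ hj)
        have hiej : i ∉ S.erase j := fun h => hi (Finset.mem_of_mem_erase h)
        rw [Finset.mem_sigma, Finset.mem_product]
        refine ⟨?_, Finset.mem_insert_self i _, ?_⟩
        · rw [hmemP]
          rw [Finset.card_insert_of_notMem hiej, Finset.card_erase_of_mem hj,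
            (hmemP S).mp hSP]
          omega
        · simp only [Finset.mem_compl, Finset.mem_insert]
          push_neg
          exact ⟨hij, Finset.notMem_erase j S⟩
      · rintro ⟨T, i, j⟩ hx
        rw [Finset.mem_sigma, Finset.mem_product] at hx
        obtain ⟨hTP, hi, hj⟩ := hx
        simp only [Finset.mem_compl] at hj
        have hij : i ≠ j := fun h => hj (h ▸ hi)
        have hjei : j ∉ T.erase i := fun h => hj (Finset.mem_of_mem_erase h)
        rw [Finset.mem_sigma, Finset.mem_product]
        refine ⟨?_, ?_, Finset.mem_insert_self j _⟩
        · rw [hmemP]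
          rw [Finset.card_insert_of_notMem hjei, Finset.card_erase_of_mem hi,
            (hmemP T).mp hTP]
          omega
        · simp only [Finset.mem_compl, Finset.mem_insert]
          push_neg
          exact ⟨hij, Finset.notMem_erase i T⟩
      · rintro ⟨S, i, j⟩ hx
        rw [Finset.mem_sigma, Finset.mem_product] at hx
        obtain ⟨hSP, hi, hj⟩ := hx
        simp only [Finset.mem_compl] at hi
        have hiej : i ∉ S.erase j := fun h => hi (Finset.mem_of_mem_erase h)
        simp only [Sigma.mk.inj_iff, heq_eq_eq]
        rw [Finset.erase_insert hiej, Finset.insert_erase hj]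
        exact ⟨rfl, trivial⟩
      · rintro ⟨T, i, j⟩ hx
        rw [Finset.mem_sigma, Finset.mem_product] at hx
        obtain ⟨hTP, hi, hj⟩ := hx
        simp only [Finset.mem_compl] at hj
        have hjei : j ∉ T.erase i := fun h => hj (Finset.mem_of_mem_erase h)
        simp only [Sigma.mk.inj_iff, heq_eq_eq]
        rw [Finset.erase_insert hjei, Finset.insert_erase hi]
        exact ⟨rfl, trivial⟩
      · rintro ⟨S, i, j⟩ _
        rfl
    have hconst : ∑ S ∈ P, ∑ i ∈ S, ∑ _j ∈ Sᶜ, loss S i = (u : ℝ) * Sin := by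
      rw [hSin, Finset.mul_sum]
      apply Finset.sum_congr rfl
      intro S hS
      rw [Finset.mul_sum]
      apply Finset.sum_congr rfl
      intro i _
      rw [Finset.sum_const, nsmul_eq_mul, hcompl S hS]
    rw [hsig1, hbij, ← hsig2, hconst]
  have key : (l : ℝ) * Sout ≤ (u : ℝ) * Sin + (n.choose l : ℝ) * ((u : ℝ) * ((l : ℝ) * β)) := by
    rw [h1]
    calc ∑ S ∈ P, ∑ i ∈ Sᶜ, ∑ _j ∈ S, loss S i
        ≤ ∑ S ∈ P, ∑ i ∈ Sᶜ, ∑ j ∈ S, (loss (insert i (S.erase j)) i + β) := h2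
      _ = (∑ S ∈ P, ∑ i ∈ Sᶜ, ∑ j ∈ S, loss (insert i (S.erase j)) i)
            + (n.choose l : ℝ) * ((u : ℝ) * ((l : ℝ) * β)) := h3
      _ = (u : ℝ) * Sin + (n.choose l : ℝ) * ((u : ℝ) * ((l : ℝ) * β)) := by rw [h4]
  -- conclude
  have hl0 : (0:ℝ) < (l : ℝ) := by exact_mod_cast hl
  have hu0 : (0:ℝ) < (u : ℝ) := by exact_mod_cast hu
  have hXsum : ∑ S ∈ P, ((1 / (u : ℝ)) * ∑ i ∈ Sᶜ, loss S i
      - (1 / (l : ℝ)) * ∑ i ∈ S, loss S i) = (1 / (u : ℝ)) * Sout - (1 / (l : ℝ)) * Sin := by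
    rw [Finset.sum_sub_distrib, ← Finset.mul_sum, ← Finset.mul_sum, hSout, hSin]
  have hgoal : (1 / (u : ℝ)) * Sout - (1 / (l : ℝ)) * Sin ≤ β * (n.choose l : ℝ) := by
    rw [← sub_nonneg]
    have hexpand : β * (n.choose l : ℝ) - ((1 / (u : ℝ)) * Sout - (1 / (l : ℝ)) * Sin)
        = ((u : ℝ) * Sin + (n.choose l : ℝ) * ((u : ℝ) * ((l : ℝ) * β)) - (l : ℝ) * Sout)
          / ((l : ℝ) * (u : ℝ)) := by
      field_simp
      ring
    rw [hexpand]
    apply div_nonneg (by linarith) (by positivity)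
  rw [havg, _root_.sups_empty, Finset.card_empty, Nat.sub_zero, Nat.sub_zero, ← hP, hXsum,
    div_le_iff₀ hN]
  exact hgoal

lemma X_swap {l u : ℕ} (hn : l + u = n) (hl : 1 ≤ l) (hu : 1 ≤ u)
    (loss : Finset (Fin n) → Fin n → ℝ) (β c2 : ℝ) (hβ : 0 ≤ β) (hc2 : 0 ≤ c2)
    (hbound : ∀ S : Finset (Fin n), S.card = l → ∀ i, 0 ≤ loss S i ∧ loss S i ≤ c2)
    (hpair : ∀ S T : Finset (Fin n), S.card = l → T.card = l →
      (S \ T).card = 1 → (T \ S).card = 1 → ∀ i, |loss S i - loss T i| ≤ β)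
    (S : Finset (Fin n)) (hS : S.card = l) (a : Fin n) (ha : a ∈ S) (b : Fin n) (hb : b ∉ S) :
    |((1 / (u : ℝ)) * ∑ i ∈ Sᶜ, loss S i - (1 / (l : ℝ)) * ∑ i ∈ S, loss S i)
      - ((1 / (u : ℝ)) * ∑ i ∈ (insert b (S.erase a))ᶜ, loss (insert b (S.erase a)) i
        - (1 / (l : ℝ)) * ∑ i ∈ insert b (S.erase a), loss (insert b (S.erase a)) i)|
      ≤ 2 * β + c2 / (l : ℝ) + c2 / (u : ℝ) := by
  have hab : a ≠ b := fun h => hb (h ▸ ha)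
  set T := insert b (S.erase a) with hTdef
  have hbea : b ∉ S.erase a := fun h => hb (Finset.mem_of_mem_erase h)
  have haea : a ∉ S.erase a := Finset.notMem_erase a S
  have hT : T.card = l := by
    rw [hTdef, Finset.card_insert_of_notMem hbea, Finset.card_erase_of_mem ha, hS]
    omega
  have hbT : b ∈ T := Finset.mem_insert_self b _
  have haT : a ∉ T := by
    rw [hTdef]
    simp only [Finset.mem_insert]
    push_neg
    exact ⟨hab, haea⟩
  have hTe : T.erase b = S.erase a := by rw [hTdef, Finset.erase_insert hbea]
  have hTc : Tᶜ = insert a (Sᶜ.erase b) := compl_swap ha hb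
  have hbSc : b ∈ Sᶜ := Finset.mem_compl.mpr hb
  have haSc : a ∉ Sᶜ := by simp [Finset.mem_compl, ha]
  have haecb : a ∉ Sᶜ.erase b := fun h => haSc (Finset.mem_of_mem_erase h)
  have hTce : Tᶜ.erase a = Sᶜ.erase b := by rw [hTc, Finset.erase_insert haecb]
  have haTc : a ∈ Tᶜ := Finset.mem_compl.mpr haT
  -- the sdiff facts
  have hSdT : (S \ T).card = 1 := by
    have : S \ T = {a} := by
      ext x
      simp only [Finset.mem_sdiff, hTdef, Finset.mem_insert, Finset.mem_erase,
        Finset.mem_singleton]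
      constructor
      · rintro ⟨hxS, hx⟩
        push_neg at hx
        by_contra hxa
        exact (hx.2 hxa) hxS
      · rintro rfl
        refine ⟨ha, ?_⟩
        push_neg
        exact ⟨hab, fun h => absurd h (by simp)⟩
    rw [this, Finset.card_singleton]
  have hTdS : (T \ S).card = 1 := by
    have : T \ S = {b} := by
      ext x
      simp only [Finset.mem_sdiff, hTdef, Finset.mem_insert, Finset.mem_erase,
        Finset.mem_singleton]
      constructor
      · rintro ⟨hx, hxS⟩
        rcases hx with rfl | ⟨_, hxS'⟩
        · rfl
        · exact absurd hxS' hxS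
      · rintro rfl
        exact ⟨Or.inl rfl, hb⟩
    rw [this, Finset.card_singleton]
  have hpairi : ∀ i, |loss S i - loss T i| ≤ β := hpair S T hS hT hSdT hTdS
  -- decompose inner sums
  have hin : ∑ i ∈ S, loss S i - ∑ i ∈ T, loss T i
      = (loss S a - loss T b) + ∑ i ∈ S.erase a, (loss S i - loss T i) := by
    have e1 : ∑ i ∈ S, loss S i = loss S a + ∑ i ∈ S.erase a, loss S i :=
      (Finset.add_sum_erase S (loss S) ha).symm
    have e2 : ∑ i ∈ T, loss T i = loss T b + ∑ i ∈ S.erase a, loss T i := by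
      rw [← hTe]
      exact (Finset.add_sum_erase T (loss T) hbT).symm
    rw [e1, e2, Finset.sum_sub_distrib]
    ring
  have hout : ∑ i ∈ Sᶜ, loss S i - ∑ i ∈ Tᶜ, loss T i
      = (loss S b - loss T a) + ∑ i ∈ Sᶜ.erase b, (loss S i - loss T i) := by
    have e1 : ∑ i ∈ Sᶜ, loss S i = loss S b + ∑ i ∈ Sᶜ.erase b, loss S i :=
      (Finset.add_sum_erase Sᶜ (loss S) hbSc).symm
    have e2 : ∑ i ∈ Tᶜ, loss T i = loss T a + ∑ i ∈ Sᶜ.erase b, loss T i := by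
      rw [← hTce]
      exact (Finset.add_sum_erase Tᶜ (loss T) haTc).symm
    rw [e1, e2, Finset.sum_sub_distrib]
    ring
  have hl0 : (0:ℝ) < (l : ℝ) := by exact_mod_cast hl
  have hu0 : (0:ℝ) < (u : ℝ) := by exact_mod_cast hu
  have hl1 : (1:ℝ) ≤ (l : ℝ) := by exact_mod_cast hl
  have hu1 : (1:ℝ) ≤ (u : ℝ) := by exact_mod_cast hu
  -- bound inner difference
  have hcardea : ((S.erase a).card : ℝ) = (l : ℝ) - 1 := by
    rw [Finset.card_erase_of_mem ha, hS]
    have : (1:ℕ) ≤ l := hl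
    push_cast [Nat.cast_sub this]
    ring
  have hcardeb : ((Sᶜ.erase b).card : ℝ) = (u : ℝ) - 1 := by
    rw [Finset.card_erase_of_mem hbSc, Finset.card_compl, Fintype.card_fin, hS]
    have h1 : (1:ℕ) ≤ n - l := by omega
    have h2 : n - l = u := by omega
    rw [h2]
    push_cast [Nat.cast_sub hu]
    ring
  have hsum_in : |∑ i ∈ S, loss S i - ∑ i ∈ T, loss T i| ≤ c2 + ((l : ℝ) - 1) * β := by
    rw [hin]
    calc |(loss S a - loss T b) + ∑ i ∈ S.erase a, (loss S i - loss T i)|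
        ≤ |loss S a - loss T b| + |∑ i ∈ S.erase a, (loss S i - loss T i)| := abs_add_le _ _
      _ ≤ c2 + ((l : ℝ) - 1) * β := by
          have b1 := hbound S hS a
          have b2 := hbound T hT b
          have hfirst : |loss S a - loss T b| ≤ c2 := abs_le.mpr ⟨by linarith [b1.1, b1.2, b2.1, b2.2], by linarith [b1.1, b1.2, b2.1, b2.2]⟩
          have hsecond : |∑ i ∈ S.erase a, (loss S i - loss T i)| ≤ ((l : ℝ) - 1) * β := by
            calc |∑ i ∈ S.erase a, (loss S i - loss T i)|
                ≤ ∑ i ∈ S.erase a, |loss S i - loss T i| := Finset.abs_sum_le_sum_abs _ _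
              _ ≤ ∑ _i ∈ S.erase a, β := Finset.sum_le_sum (fun i _ => hpairi i)
              _ = ((l : ℝ) - 1) * β := by
                  rw [Finset.sum_const, nsmul_eq_mul, hcardea]
          linarith
  have hsum_out : |∑ i ∈ Sᶜ, loss S i - ∑ i ∈ Tᶜ, loss T i| ≤ c2 + ((u : ℝ) - 1) * β := by
    rw [hout]
    calc |(loss S b - loss T a) + ∑ i ∈ Sᶜ.erase b, (loss S i - loss T i)|
        ≤ |loss S b - loss T a| + |∑ i ∈ Sᶜ.erase b, (loss S i - loss T i)| := abs_add_le _ _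
      _ ≤ c2 + ((u : ℝ) - 1) * β := by
          have b1 := hbound S hS b
          have b2 := hbound T hT a
          have hfirst : |loss S b - loss T a| ≤ c2 := abs_le.mpr ⟨by linarith [b1.1, b1.2, b2.1, b2.2], by linarith [b1.1, b1.2, b2.1, b2.2]⟩
          have hsecond : |∑ i ∈ Sᶜ.erase b, (loss S i - loss T i)| ≤ ((u : ℝ) - 1) * β := by
            calc |∑ i ∈ Sᶜ.erase b, (loss S i - loss T i)|
                ≤ ∑ i ∈ Sᶜ.erase b, |loss S i - loss T i| := Finset.abs_sum_le_sum_abs _ _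
              _ ≤ ∑ _i ∈ Sᶜ.erase b, β := Finset.sum_le_sum (fun i _ => hpairi i)
              _ = ((u : ℝ) - 1) * β := by
                  rw [Finset.sum_const, nsmul_eq_mul, hcardeb]
          linarith
  -- combine
  have hXdiff : ((1 / (u : ℝ)) * ∑ i ∈ Sᶜ, loss S i - (1 / (l : ℝ)) * ∑ i ∈ S, loss S i)
      - ((1 / (u : ℝ)) * ∑ i ∈ Tᶜ, loss T i - (1 / (l : ℝ)) * ∑ i ∈ T, loss T i)
      = (1 / (u : ℝ)) * (∑ i ∈ Sᶜ, loss S i - ∑ i ∈ Tᶜ, loss T i)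
        - (1 / (l : ℝ)) * (∑ i ∈ S, loss S i - ∑ i ∈ T, loss T i) := by ring
  rw [hXdiff]
  calc |(1 / (u : ℝ)) * (∑ i ∈ Sᶜ, loss S i - ∑ i ∈ Tᶜ, loss T i)
        - (1 / (l : ℝ)) * (∑ i ∈ S, loss S i - ∑ i ∈ T, loss T i)|
      ≤ |(1 / (u : ℝ)) * (∑ i ∈ Sᶜ, loss S i - ∑ i ∈ Tᶜ, loss T i)|
        + |(1 / (l : ℝ)) * (∑ i ∈ S, loss S i - ∑ i ∈ T, loss T i)| := abs_sub _ _
    _ = (1 / (u : ℝ)) * |∑ i ∈ Sᶜ, loss S i - ∑ i ∈ Tᶜ, loss T i|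
        + (1 / (l : ℝ)) * |∑ i ∈ S, loss S i - ∑ i ∈ T, loss T i| := by
        rw [abs_mul, abs_mul, abs_of_pos (by positivity : (0:ℝ) < 1 / (u:ℝ)),
          abs_of_pos (by positivity : (0:ℝ) < 1 / (l:ℝ))]
    _ ≤ (1 / (u : ℝ)) * (c2 + ((u : ℝ) - 1) * β) + (1 / (l : ℝ)) * (c2 + ((l : ℝ) - 1) * β) := by
        have := mul_le_mul_of_nonneg_left hsum_out (by positivity : (0:ℝ) ≤ 1 / (u:ℝ))
        have := mul_le_mul_of_nonneg_left hsum_in (by positivity : (0:ℝ) ≤ 1 / (l:ℝ))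
        linarith
    _ ≤ 2 * β + c2 / (l : ℝ) + c2 / (u : ℝ) := by
        have e1 : (1 / (u : ℝ)) * (c2 + ((u : ℝ) - 1) * β) - (c2 / (u:ℝ) + β) = -β / (u:ℝ) := by
          field_simp
          ring
        have e2 : (1 / (l : ℝ)) * (c2 + ((l : ℝ) - 1) * β) - (c2 / (l:ℝ) + β) = -β / (l:ℝ) := by
          field_simp
          ring
        have p1 : -β / (u:ℝ) ≤ 0 := by
          apply div_nonpos_of_nonpos_of_nonneg <;> linarith
        have p2 : -β / (l:ℝ) ≤ 0 := by
          apply div_nonpos_of_nonpos_of_nonneg <;> linarith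
        linarith

lemma swap_facts {S : Finset (Fin n)} {a b : Fin n} (ha : a ∈ S) (hb : b ∉ S) :
    (insert b (S.erase a)).card = S.card ∧ (S \ insert b (S.erase a)).card = 1 ∧
      ((insert b (S.erase a)) \ S).card = 1 := by
  have hab : a ≠ b := fun h => hb (h ▸ ha)
  have hbea : b ∉ S.erase a := fun h => hb (Finset.mem_of_mem_erase h)
  have hSpos : 0 < S.card := Finset.card_pos.mpr ⟨a, ha⟩
  refine ⟨?_, ?_, ?_⟩
  · rw [Finset.card_insert_of_notMem hbea, Finset.card_erase_of_mem ha]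
    omega
  · have : S \ insert b (S.erase a) = {a} := by
      ext x
      simp only [Finset.mem_sdiff, Finset.mem_insert, Finset.mem_erase, Finset.mem_singleton]
      constructor
      · rintro ⟨hxS, hx⟩
        push_neg at hx
        by_contra hxa
        exact (hx.2 hxa) hxS
      · rintro rfl
        refine ⟨ha, ?_⟩
        push_neg
        exact ⟨hab, fun h => absurd h (by simp)⟩
    rw [this, Finset.card_singleton]
  · have : (insert b (S.erase a)) \ S = {b} := by
      ext x
      simp only [Finset.mem_sdiff, Finset.mem_insert, Finset.mem_erase, Finset.mem_singleton]
      constructor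
      · rintro ⟨hx, hxS⟩
        rcases hx with rfl | ⟨_, hxS'⟩
        · rfl
        · exact absurd hxS' hxS
      · rintro rfl
        exact ⟨Or.inl rfl, hb⟩
    rw [this, Finset.card_singleton]

/-- generalization bound for uniformly β-stable transductive algorithms:
with probability at least `1 − δ` over a size-`l` labeled set `S` drawn uniformly at
random, `R_S(f_S) ≤ R̂_S(f_S) + β + (2β + c²(l+u)/(lu))·√(π(l,u)·ln(1/δ)/2)`. -/
theorem stmt_1 {n : ℕ} (hn : 2 ≤ n)
    (l u : ℕ) (hl : 1 ≤ l) (hln : l ≤ n - 1) (hu : u = n - l)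
    (y : Fin n → ℝ)
    (f : Finset (Fin n) → Fin n → ℝ)
    (β : ℝ)
    (hstable : ∀ S S' : Finset (Fin n), S.card = l → S'.card = l →
      (S \ S').card = 1 → (S' \ S).card = 1 →
      ∀ i : Fin n, |(f S i - y i) ^ 2 - (f S' i - y i) ^ 2| ≤ β)
    (c : ℝ) (hc : ∀ S : Finset (Fin n), S.card = l → ∀ i, |f S i - y i| ≤ c)
    (δ : ℝ) (hδ : 0 < δ) :
    (1 - δ) * ((Finset.powersetCard l (Finset.univ : Finset (Fin n))).card : ℝ) ≤
      (((Finset.powersetCard l (Finset.univ : Finset (Fin n))).filter (fun S =>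
        (1 / (u : ℝ)) * ∑ i ∈ Sᶜ, (f S i - y i) ^ 2 ≤
          (1 / (l : ℝ)) * ∑ i ∈ S, (f S i - y i) ^ 2 + β +
            (2 * β + c ^ 2 * ((l : ℝ) + (u : ℝ)) / ((l : ℝ) * (u : ℝ))) *
              Real.sqrt (piLU l u * Real.log (1 / δ) / 2))).card : ℝ) := by
  classical
  set P := Finset.powersetCard l (Finset.univ : Finset (Fin n)) with hPdef
  have hNnn : (0:ℝ) ≤ (P.card : ℝ) := Nat.cast_nonneg _
  rcases le_or_gt 1 δ with hδ1 | hδ1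
  · have h1 : (1 - δ) * (P.card : ℝ) ≤ 0 :=
      mul_nonpos_iff.mpr (Or.inr ⟨by linarith, hNnn⟩)
    exact le_trans h1 (Nat.cast_nonneg _)
  -- δ < 1 from now on
  have hlu : l + u = n := by omega
  have hu1 : 1 ≤ u := by omega
  have hln' : l < n := by omega
  have hl0 : (0:ℝ) < (l : ℝ) := by exact_mod_cast hl
  have hu0 : (0:ℝ) < (u : ℝ) := by exact_mod_cast hu1
  have hl1 : (1:ℝ) ≤ (l : ℝ) := by exact_mod_cast hl
  have hu1' : (1:ℝ) ≤ (u : ℝ) := by exact_mod_cast hu1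
  have hL : 0 < Real.log (1 / δ) := by
    apply Real.log_pos
    rw [lt_div_iff₀ hδ]
    linarith
  -- sample objects to derive nonnegativity
  obtain ⟨S₀, -, hS₀⟩ := Finset.exists_subset_card_eq
    (by rw [Finset.card_univ, Fintype.card_fin]; omega : l ≤ (Finset.univ : Finset (Fin n)).card)
  obtain ⟨a₀, ha₀⟩ := Finset.card_pos.mp (by rw [hS₀]; omega : 0 < S₀.card)
  obtain ⟨b₀, hb₀⟩ := Finset.card_pos.mp
    (by rw [Finset.card_compl, Fintype.card_fin, hS₀]; omega : 0 < S₀ᶜ.card)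
  have hb₀' : b₀ ∉ S₀ := Finset.mem_compl.mp hb₀
  have hsf₀ := swap_facts ha₀ hb₀'
  have hβ0 : 0 ≤ β := by
    have := hstable S₀ (insert b₀ (S₀.erase a₀)) hS₀ (by rw [hsf₀.1, hS₀])
      hsf₀.2.1 hsf₀.2.2 a₀
    exact le_trans (abs_nonneg _) this
  have hc0 : 0 ≤ c := le_trans (abs_nonneg _) (hc S₀ hS₀ a₀)
  have hbound : ∀ S : Finset (Fin n), S.card = l → ∀ i,
      0 ≤ (f S i - y i) ^ 2 ∧ (f S i - y i) ^ 2 ≤ c ^ 2 := by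
    intro S hS i
    refine ⟨sq_nonneg _, ?_⟩
    calc (f S i - y i) ^ 2 = |f S i - y i| ^ 2 := (sq_abs _).symm
      _ ≤ c ^ 2 := pow_le_pow_left₀ (abs_nonneg _) (hc S hS i) 2
  set K := 2 * β + c ^ 2 * ((l : ℝ) + (u : ℝ)) / ((l : ℝ) * (u : ℝ)) with hK
  have hq0 : 0 ≤ c ^ 2 * ((l : ℝ) + (u : ℝ)) / ((l : ℝ) * (u : ℝ)) := by positivity
  have hKnn : 0 ≤ K := by rw [hK]; linarith
  set X := fun S : Finset (Fin n) => (1 / (u : ℝ)) * ∑ i ∈ Sᶜ, (f S i - y i) ^ 2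
    - (1 / (l : ℝ)) * ∑ i ∈ S, (f S i - y i) ^ 2 with hX
  rcases eq_or_lt_of_le hKnn with hK0 | hKpos
  · -- degenerate case K = 0
    have hβz : β = 0 := by rw [hK] at hK0; linarith
    have hcz : c = 0 := by
      by_contra hcne
      have hcpos : 0 < c := lt_of_le_of_ne hc0 (Ne.symm hcne)
      have : 0 < c ^ 2 * ((l : ℝ) + (u : ℝ)) / ((l : ℝ) * (u : ℝ)) := by positivity
      rw [hK] at hK0
      linarith
    have hloss0 : ∀ S : Finset (Fin n), S.card = l → ∀ i, f S i - y i = 0 := by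
      intro S hS i
      have := hc S hS i
      rw [hcz] at this
      exact abs_eq_zero.mp (le_antisymm this (abs_nonneg _))
    have hfilter : P.filter (fun S =>
        (1 / (u : ℝ)) * ∑ i ∈ Sᶜ, (f S i - y i) ^ 2 ≤
          (1 / (l : ℝ)) * ∑ i ∈ S, (f S i - y i) ^ 2 + β +
            K * Real.sqrt (piLU l u * Real.log (1 / δ) / 2)) = P := by
      apply Finset.filter_true_of_mem
      intro S hS
      have hScard : S.card = l := by
        rw [hPdef, Finset.mem_powersetCard_univ] at hS
        exact hS
      have hz1 : ∑ i ∈ Sᶜ, (f S i - y i) ^ 2 = 0 :=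
        Finset.sum_eq_zero (fun i _ => by rw [hloss0 S hScard i]; ring)
      have hz2 : ∑ i ∈ S, (f S i - y i) ^ 2 = 0 :=
        Finset.sum_eq_zero (fun i _ => by rw [hloss0 S hScard i]; ring)
      rw [hz1, hz2, hβz, ← hK0]
      simp
    rw [hfilter]
    nlinarith [hNnn, hδ]
  · -- main case K > 0
    set t := K * Real.sqrt (piLU l u * Real.log (1 / δ) / 2) with ht
    have hmax1 : (1:ℝ) ≤ ((max l u : ℕ) : ℝ) := by
      exact_mod_cast le_trans hl (le_max_left l u)
    have hmaxfrac : 1 / (2 * ((max l u : ℕ) : ℝ)) ≤ 1 / 2 := by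
      apply div_le_div_of_nonneg_left (by norm_num) (by norm_num) <;> linarith
    have hπ0 : 0 < piLU l u := by
      rw [piLU]
      apply mul_pos
      · apply div_pos (by positivity)
        norm_num
        linarith
      · apply div_pos one_pos
        linarith
    have hsq0 : 0 < Real.sqrt (piLU l u * Real.log (1 / δ) / 2) :=
      Real.sqrt_pos.mpr (by positivity)
    have ht0 : 0 < t := mul_pos hKpos hsq0
    have hswapX : ∀ S : Finset (Fin n), S.card = l → ∀ a ∈ S, ∀ b, b ∉ S →
        |X S - X (insert b (S.erase a))| ≤ K := by
      intro S hS a ha b hb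
      have h := X_swap hlu hl hu1 (fun S i => (f S i - y i) ^ 2) β (c ^ 2) hβ0 (by positivity)
        hbound hstable S hS a ha b hb
      have hKeq : 2 * β + c ^ 2 / (l : ℝ) + c ^ 2 / (u : ℝ) = K := by
        rw [hK]
        field_simp
        ring
      simp only [hX]
      rw [← hKeq]
      exact h
    have hμβ : havg X l ∅ ≤ β := by
      apply mu_le hlu hl hu1 (fun S i => (f S i - y i) ^ 2) β
      intro S hS i j hi hj
      have hsf := swap_facts hj hi
      have habs := hstable S (insert i (S.erase j)) hS (by rw [hsf.1, hS]) hsf.2.1 hsf.2.2 i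
      have := (abs_le.mp habs).2
      linarith
    -- the concentration count
    have hmain : ((P.filter (fun S => havg X l ∅ + t ≤ X S)).card : ℝ)
        ≤ (n.choose l : ℝ) * Real.exp (-2 * t ^ 2 / (K ^ 2 * piLU l u)) := by
      rcases le_or_gt l u with hle | hlt
      · apply conc_count X K hKpos hswapX hl hln' t ht0 (piLU l u)
        have h := sigR_le n l hl hln'
        have e : n - l = u := by omega
        rw [e] at h
        have hm : max l u = u := max_eq_right hle
        rw [piLU, hm]
        exact h
      · -- complement transfer
        set X' := fun T : Finset (Fin n) => X Tᶜ with hX'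
        have hswapX' : ∀ T : Finset (Fin n), T.card = u → ∀ a ∈ T, ∀ b, b ∉ T →
            |X' T - X' (insert b (T.erase a))| ≤ K := by
          intro T hT a ha b hb
          have hcompl : Tᶜ.card = l := by
            rw [Finset.card_compl, Fintype.card_fin, hT]; omega
          have hbTc : b ∈ Tᶜ := Finset.mem_compl.mpr hb
          have haTc : a ∉ Tᶜ := by simp [Finset.mem_compl, ha]
          have h := hswapX Tᶜ hcompl b hbTc a haTc
          simp only [hX']
          rw [compl_swap ha hb]
          exact h
        have hch : n.choose u = n.choose l := by
          rw [show u = n - l from by omega]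
          exact Nat.choose_symm (by omega)
        have hμeq : havg X' u ∅ = havg X l ∅ := by
          rw [havg, havg, _root_.sups_empty, _root_.sups_empty]
          simp only [Finset.card_empty, Nat.sub_zero]
          have hsum : ∑ T ∈ Finset.powersetCard u (Finset.univ : Finset (Fin n)), X' T
              = ∑ S ∈ Finset.powersetCard l (Finset.univ : Finset (Fin n)), X S := by
            apply Finset.sum_nbij' (fun T => Tᶜ) (fun S => Sᶜ)
            · intro T hT
              rw [Finset.mem_powersetCard_univ] at hT ⊢
              rw [Finset.card_compl, Fintype.card_fin, hT]
              omega
            · intro S hS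
              rw [Finset.mem_powersetCard_univ] at hS ⊢
              rw [Finset.card_compl, Fintype.card_fin, hS]
              omega
            · intro T _
              rw [compl_compl]
            · intro S _
              rw [compl_compl]
            · intro T _
              rfl
          rw [hsum, hch]
        have hcount : (P.filter (fun S => havg X l ∅ + t ≤ X S)).card
            = ((Finset.powersetCard u (Finset.univ : Finset (Fin n))).filter
                (fun T => havg X' u ∅ + t ≤ X' T)).card := by
          rw [hμeq]
          apply Finset.card_nbij' (fun S => Sᶜ) (fun T => Tᶜ)
          · intro S hS
            simp only [Finset.mem_coe, Finset.mem_filter] at hS ⊢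
            rw [Finset.mem_powersetCard_univ] at hS ⊢
            constructor
            · rw [Finset.card_compl, Fintype.card_fin, hS.1]
              omega
            · simp only [hX', compl_compl]
              exact hS.2
          · intro T hT
            simp only [Finset.mem_coe, Finset.mem_filter] at hT ⊢
            rw [Finset.mem_powersetCard_univ] at hT ⊢
            constructor
            · rw [Finset.card_compl, Fintype.card_fin, hT.1]; omega
            · simp only [hX'] at hT
              exact hT.2
          · intro S _
            exact compl_compl S
          · intro T _
            exact compl_compl T
        rw [hcount, ← hch]
        apply conc_count X' K hKpos hswapX' hu1 (by omega : u < n) t ht0 (piLU l u)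
        have h := sigR_le n u hu1 (by omega : u < n)
        have e : n - u = l := by omega
        rw [e] at h
        have hm : max l u = l := max_eq_left hlt.le
        calc sigR n u ≤ ((u : ℝ) * (l : ℝ) / ((u : ℝ) + (l : ℝ) - 0.5))
              * (1 / (1 - 1 / (2 * (l : ℝ)))) := h
          _ = piLU l u := by
              rw [piLU, hm]
              ring
    -- evaluate the exponential
    have hexp : Real.exp (-2 * t ^ 2 / (K ^ 2 * piLU l u)) = δ := by
      have hsqr : Real.sqrt (piLU l u * Real.log (1 / δ) / 2) ^ 2
          = piLU l u * Real.log (1 / δ) / 2 := Real.sq_sqrt (by positivity)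
      have harg : -2 * t ^ 2 / (K ^ 2 * piLU l u) = -Real.log (1 / δ) := by
        have ht2 : t ^ 2 = K ^ 2 * (piLU l u * Real.log (1 / δ) / 2) := by
          rw [ht, mul_pow, hsqr]
        rw [ht2]
        field_simp
      rw [harg, Real.log_div one_ne_zero hδ.ne', Real.log_one, neg_sub, sub_zero, Real.exp_log hδ]
    -- final counting
    have hPcard : P.card = n.choose l := by
      rw [hPdef, Finset.card_powersetCard, Finset.card_univ, Fintype.card_fin]
    set cond : Finset (Fin n) → Prop := fun S =>
      (1 / (u : ℝ)) * ∑ i ∈ Sᶜ, (f S i - y i) ^ 2 ≤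
        (1 / (l : ℝ)) * ∑ i ∈ S, (f S i - y i) ^ 2 + β +
          K * Real.sqrt (piLU l u * Real.log (1 / δ) / 2) with hcond
    have hsubset : P.filter (fun S => ¬ cond S) ⊆ P.filter (fun S => havg X l ∅ + t ≤ X S) := by
      intro S hS
      rw [Finset.mem_filter] at hS ⊢
      refine ⟨hS.1, ?_⟩
      have hnc := hS.2
      rw [hcond] at hnc
      push_neg at hnc
      have : β + t < X S := by
        rw [hX, ht]
        simp only []
        linarith
      linarith
    have hsplit := Finset.card_filter_add_card_filter_not (s := P) (p := cond)
    have hbadle : ((P.filter (fun S => ¬ cond S)).card : ℝ) ≤ (P.card : ℝ) * δ := by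
      calc ((P.filter (fun S => ¬ cond S)).card : ℝ)
          ≤ ((P.filter (fun S => havg X l ∅ + t ≤ X S)).card : ℝ) := by
            exact_mod_cast Finset.card_le_card hsubset
        _ ≤ (n.choose l : ℝ) * Real.exp (-2 * t ^ 2 / (K ^ 2 * piLU l u)) := hmain
        _ = (P.card : ℝ) * δ := by rw [hexp, hPcard]
    have hgoodcard : ((P.filter cond).card : ℝ)
        = (P.card : ℝ) - ((P.filter (fun S => ¬ cond S)).card : ℝ) := by
      have := hsplit
      have h2 : ((P.filter cond).card : ℝ) + ((P.filter (fun S => ¬ cond S)).card : ℝ)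
          = (P.card : ℝ) := by exact_mod_cast congrArg (Nat.cast : ℕ → ℝ) this
      linarith
    calc (1 - δ) * (P.card : ℝ) = (P.card : ℝ) - (P.card : ℝ) * δ := by ring
      _ ≤ (P.card : ℝ) - ((P.filter (fun S => ¬ cond S)).card : ℝ) := by linarith
      _ = ((P.filter cond).card : ℝ) := hgoodcard.symm
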